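/- Let $(a_{i,j})$, $i\in\{1,\dots,L\}$, $j\in\{1,\dots,N\}$ (with $a_{i,0}:=a_{i,N}$), be i.i.d. Bernoulli($p$) random variables, $0<p<1$, $N\ge 2$. Fix $\ell$ and $n$, and define $S_{\ell,n} := \sum_{j\neq n} \sum_{i=1}^L a_{\ell,j}\, a_{i,n-1}\,(a_{i,j-1}-p)$. Then for all real $t$, $\operatorname{E}[e^{t S_{\ell,n}}] \le e^{\frac{t^2}{8} L (N-1)}$. -/

import Mathlib

open MeasureTheory Real

/-- The Bernoulli(p) measure on ℝ: mass `p` at `1` and mass `1-p` at `0`. -/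
noncomputable def berMeasure (p : ℝ) : Measure ℝ :=
  ENNReal.ofReal p • Measure.dirac 1 + ENNReal.ofReal (1 - p) • Measure.dirac 0

lemma hoeff_aux (p : ℝ) (hp : 0 ≤ p) (hp1 : p ≤ 1) (t : ℝ) :
    p * Real.exp (t * (1 - p)) + (1 - p) * Real.exp (t * (0 - p)) ≤ Real.exp (t ^ 2 / 8) := by
  have hD : ∀ x : ℝ, 0 < 1 - p + p * Real.exp x := by
    intro x
    rcases lt_or_eq_of_le hp1 with h | h
    · have : 0 ≤ p * Real.exp x := mul_nonneg hp (Real.exp_pos x).le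
      linarith
    · have : 0 < p * Real.exp x := by
        subst h; simpa using Real.exp_pos x
      linarith
  set g1 : ℝ → ℝ := fun x => x / 4 + p - p * Real.exp x / (1 - p + p * Real.exp x) with hg1def
  set g : ℝ → ℝ := fun x => x ^ 2 / 8 + x * p - Real.log (1 - p + p * Real.exp x) with hgdef
  have hder : ∀ x : ℝ, HasDerivAt g (g1 x) x := by
    intro x
    have h1 : HasDerivAt (fun x : ℝ => 1 - p + p * Real.exp x) (p * Real.exp x) x := by
      simpa using ((Real.hasDerivAt_exp x).const_mul p).const_add (1 - p)
    have h2 : HasDerivAt (fun x : ℝ => Real.log (1 - p + p * Real.exp x))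
        (p * Real.exp x / (1 - p + p * Real.exp x)) x := h1.log (hD x).ne'
    have h3 : HasDerivAt (fun x : ℝ => x ^ 2 / 8 + x * p) (x / 4 + p) x := by
      have := ((hasDerivAt_pow 2 x).div_const 8).add ((hasDerivAt_id x).mul_const p)
      exact this.congr_deriv (by ring)
    exact h3.sub h2
  have hder1 : ∀ x : ℝ, HasDerivAt g1
      (1 / 4 - p * Real.exp x * (1 - p) / (1 - p + p * Real.exp x) ^ 2) x := by
    intro x
    have h1 : HasDerivAt (fun x : ℝ => 1 - p + p * Real.exp x) (p * Real.exp x) x := by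
      simpa using ((Real.hasDerivAt_exp x).const_mul p).const_add (1 - p)
    have h2 : HasDerivAt (fun x : ℝ => p * Real.exp x) (p * Real.exp x) x :=
      (Real.hasDerivAt_exp x).const_mul p
    have h3 := h2.div h1 (hD x).ne'
    have h4 : HasDerivAt (fun x : ℝ => x / 4 + p) (1 / 4) x := by
      simpa using (hasDerivAt_id x).div_const 4 |>.add_const p
    have h5 := h4.sub h3
    refine h5.congr_deriv ?_
    have hne := (hD x).ne'
    field_simp
    ring
  have hd1nonneg : ∀ x : ℝ, 0 ≤ 1 / 4 - p * Real.exp x * (1 - p) / (1 - p + p * Real.exp x) ^ 2 := by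
    intro x
    rw [sub_nonneg, div_le_iff₀ (pow_pos (hD x) 2)]
    nlinarith [sq_nonneg (1 - p - p * Real.exp x), Real.exp_pos x]
  have hg1mono : Monotone g1 :=
    monotone_of_deriv_nonneg (fun x => (hder1 x).differentiableAt)
      (fun x => by rw [(hder1 x).deriv]; exact hd1nonneg x)
  have hg10 : g1 0 = 0 := by
    have : (1 : ℝ) - p + p * Real.exp 0 = 1 := by simp
    simp [hg1def, this]
  have hgdiff : Differentiable ℝ g := fun x => (hder x).differentiableAt
  have hg0 : g 0 = 0 := by
    have : (1 : ℝ) - p + p * Real.exp 0 = 1 := by simp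
    simp [hgdef, this]
  have hgnonneg : ∀ x : ℝ, 0 ≤ g x := by
    intro x
    rcases le_total 0 x with hx | hx
    · have hmono : MonotoneOn g (Set.Ici 0) := by
        apply monotoneOn_of_deriv_nonneg (convex_Ici 0) hgdiff.continuous.continuousOn
          hgdiff.differentiableOn
        intro y hy
        rw [(hder y).deriv]
        have : (0:ℝ) ≤ y := by
          rw [interior_Ici] at hy; exact le_of_lt hy
        calc (0:ℝ) = g1 0 := hg10.symm
          _ ≤ g1 y := hg1mono this
      calc (0:ℝ) = g 0 := hg0.symm
        _ ≤ g x := hmono (by simp) (by simpa using hx) hx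
    · have hanti : AntitoneOn g (Set.Iic 0) := by
        apply antitoneOn_of_deriv_nonpos (convex_Iic 0) hgdiff.continuous.continuousOn
          hgdiff.differentiableOn
        intro y hy
        rw [(hder y).deriv]
        have : y ≤ (0:ℝ) := by
          rw [interior_Iic] at hy; exact le_of_lt hy
        calc g1 y ≤ g1 0 := hg1mono this
          _ = 0 := hg10
      calc (0:ℝ) = g 0 := hg0.symm
        _ ≤ g x := hanti (by simpa using hx) (by simp) hx
  have hkey : 1 - p + p * Real.exp t ≤ Real.exp (t ^ 2 / 8 + t * p) := by
    have h := hgnonneg t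
    have hlog : Real.log (1 - p + p * Real.exp t) ≤ t ^ 2 / 8 + t * p := by
      simp only [hgdef] at h; linarith
    exact (Real.log_le_iff_le_exp (hD t)).mp hlog
  have hlhs : p * Real.exp (t * (1 - p)) + (1 - p) * Real.exp (t * (0 - p))
      = Real.exp (-(t * p)) * (1 - p + p * Real.exp t) := by
    rw [show t * (1 - p) = t + -(t * p) by ring, show t * (0 - p) = -(t * p) by ring,
      Real.exp_add]
    ring
  rw [hlhs]
  calc Real.exp (-(t * p)) * (1 - p + p * Real.exp t)
      ≤ Real.exp (-(t * p)) * Real.exp (t ^ 2 / 8 + t * p) :=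
        mul_le_mul_of_nonneg_left hkey (Real.exp_pos _).le
    _ = Real.exp (t ^ 2 / 8) := by rw [← Real.exp_add]; ring_nf

lemma peel_eq {ι : Type*} [Fintype ι] [DecidableEq ι] (w : Bool → ℝ)
    (hw : w true + w false = 1)
    (q0 : ι) (G : (ι → Bool) → ℝ) (φ : (ι → Bool) → Bool → ℝ)
    (hG : ∀ s b, G (Function.update s q0 b) = G s)
    (hφ : ∀ s b b', φ (Function.update s q0 b') b = φ s b) :
    ∑ s : ι → Bool, w (s q0) * G s * φ s (s q0)
      = ∑ s : ι → Bool, w (s q0) * G s * (∑ b : Bool, w b * φ s b) := by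
  set e := (Equiv.funSplitAt q0 Bool).symm with he
  have fact1 : ∀ (b : Bool) (y : { j // j ≠ q0 } → Bool), e (b, y) q0 = b := by
    intro b y
    simp [he, Equiv.funSplitAt_symm_apply]
  have fact2 : ∀ (b b' : Bool) (y : { j // j ≠ q0 } → Bool),
      Function.update (e (b, y)) q0 b' = e (b', y) := by
    intro b b' y
    funext j
    rcases eq_or_ne j q0 with h | h
    · subst h
      simp [he, Equiv.funSplitAt_symm_apply, Function.update_self]
    · simp [he, Equiv.funSplitAt_symm_apply, Function.update_of_ne h, h]
  have hGy : ∀ (b : Bool) (y : { j // j ≠ q0 } → Bool), G (e (b, y)) = G (e (false, y)) := by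
    intro b y
    rw [← fact2 false b y, hG]
  have hφy : ∀ (b b' : Bool) (y : { j // j ≠ q0 } → Bool),
      φ (e (b, y)) b' = φ (e (false, y)) b' := by
    intro b b' y
    rw [← fact2 false b y, hφ]
  rw [← Equiv.sum_comp e (fun s => w (s q0) * G s * φ s (s q0)),
    ← Equiv.sum_comp e (fun s => w (s q0) * G s * (∑ b : Bool, w b * φ s b))]
  rw [Fintype.sum_prod_type, Fintype.sum_prod_type]
  simp only [fact1]
  rw [Finset.sum_comm, Finset.sum_comm (s := Finset.univ) (t := Finset.univ)
    (f := fun b y => w b * G (e (b, y)) * (∑ b' : Bool, w b' * φ (e (b, y)) b'))]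
  apply Finset.sum_congr rfl
  intro y _
  simp only [hGy, hφy]
  rw [Fintype.sum_bool, Fintype.sum_bool]
  set G0 := G (e (false, y))
  set pt := φ (e (false, y)) true
  set pf := φ (e (false, y)) false
  rw [Fintype.sum_bool]
  linear_combination (-(G0 * (w true * pt + w false * pf))) * hw

lemma peel_le {ι : Type*} [Fintype ι] [DecidableEq ι] (w : Bool → ℝ)
    (hw : w true + w false = 1) (hw0 : ∀ b, 0 ≤ w b)
    (q0 : ι) (G : (ι → Bool) → ℝ) (φ : (ι → Bool) → Bool → ℝ)
    (hG : ∀ s b, G (Function.update s q0 b) = G s)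
    (hφ : ∀ s b b', φ (Function.update s q0 b') b = φ s b)
    (hG0 : ∀ s, 0 ≤ G s) (K : ℝ)
    (hK : ∀ s, ∑ b : Bool, w b * φ s b ≤ K) :
    ∑ s : ι → Bool, w (s q0) * G s * φ s (s q0)
      ≤ K * ∑ s : ι → Bool, w (s q0) * G s := by
  rw [peel_eq w hw q0 G φ hG hφ]
  calc ∑ s : ι → Bool, w (s q0) * G s * (∑ b : Bool, w b * φ s b)
      ≤ ∑ s : ι → Bool, w (s q0) * G s * K := by
        apply Finset.sum_le_sum
        intro s _
        exact mul_le_mul_of_nonneg_left (hK s) (mul_nonneg (hw0 _) (hG0 s))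
    _ = K * ∑ s : ι → Bool, w (s q0) * G s := by
        rw [← Finset.sum_mul, mul_comm]

lemma sum_weights {ι : Type*} [Fintype ι] [DecidableEq ι] (w : Bool → ℝ)
    (hw : w true + w false = 1) :
    ∑ s : ι → Bool, ∏ q : ι, w (s q) = 1 := by
  rw [← Fintype.prod_sum (fun _ b => w b)]
  have h1 : ∑ b : Bool, w b = 1 := by rw [Fintype.sum_bool]; exact hw
  simp only [h1, Finset.prod_const_one]

lemma inner_peel {ι : Type*} [Fintype ι] [DecidableEq ι] {κ : Type*} [DecidableEq κ]
    (w : Bool → ℝ) (hw : w true + w false = 1) (hw0 : ∀ b, 0 ≤ w b)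
    (K : ℝ)
    (A : (ι → Bool) → ℝ) (hA0 : ∀ s, 0 ≤ A s)
    (coord : κ → ι) (hcoord : Function.Injective coord)
    (φ : κ → (ι → Bool) → Bool → ℝ)
    (hAinv : ∀ s i b, A (Function.update s (coord i) b) = A s)
    (hφinv : ∀ s i i' b b', φ i (Function.update s (coord i') b') b = φ i s b)
    (hφ0 : ∀ i s b, 0 ≤ φ i s b)
    (hφK : ∀ i s, ∑ b : Bool, w b * φ i s b ≤ K)
    (u : Finset κ) :
    ∑ s : ι → Bool, (∏ q : ι, w (s q)) * (A s * ∏ i ∈ u, φ i s (s (coord i)))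
      ≤ K ^ u.card * ∑ s : ι → Bool, (∏ q : ι, w (s q)) * A s := by
  classical
  induction u using Finset.induction_on with
  | empty => simp
  | insert _ _ hi0 =>
    rename_i i0 u ih
    have hK0 : 0 ≤ K := le_trans (Finset.sum_nonneg fun b _ => mul_nonneg (hw0 b) (hφ0 i0 _ b)) (hφK i0 (fun _ => false))
    set q0 : ι := coord i0 with hq0
    set G : (ι → Bool) → ℝ := fun s =>
      (∏ q ∈ Finset.univ.erase q0, w (s q)) * (A s * ∏ i ∈ u, φ i s (s (coord i)))
      with hGdef
    have hrw : ∀ s : ι → Bool,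
        (∏ q : ι, w (s q)) * (A s * ∏ i ∈ insert i0 u, φ i s (s (coord i)))
          = w (s q0) * G s * φ i0 s (s q0) := by
      intro s
      rw [Finset.prod_insert hi0,
        ← Finset.mul_prod_erase Finset.univ (fun q => w (s q)) (Finset.mem_univ q0)]
      simp only [hGdef]
      ring
    have hGinv : ∀ s b, G (Function.update s q0 b) = G s := by
      intro s b
      simp only [hGdef]
      congr 1
      · apply Finset.prod_congr rfl
        intro q hq
        rw [Function.update_of_ne (Finset.ne_of_mem_erase hq)]
      · congr 1
        · exact hAinv s i0 b
        · apply Finset.prod_congr rfl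
          intro i hi
          have hne : coord i ≠ q0 := by
            intro h
            exact hi0 (by rwa [hcoord h] at hi)
          rw [hφinv, Function.update_of_ne hne]
    have hφinv0 : ∀ s b b', φ i0 (Function.update s q0 b') b = φ i0 s b := by
      intro s b b'
      exact hφinv s i0 i0 b b'
    have hG0 : ∀ s, 0 ≤ G s := by
      intro s
      apply mul_nonneg
      · exact Finset.prod_nonneg fun q _ => hw0 _
      · exact mul_nonneg (hA0 s) (Finset.prod_nonneg fun i _ => hφ0 i s _)
    calc ∑ s : ι → Bool, (∏ q : ι, w (s q)) * (A s * ∏ i ∈ insert i0 u, φ i s (s (coord i)))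
        = ∑ s : ι → Bool, w (s q0) * G s * φ i0 s (s q0) :=
          Finset.sum_congr rfl fun s _ => hrw s
      _ ≤ K * ∑ s : ι → Bool, w (s q0) * G s :=
          peel_le w hw hw0 q0 G (φ i0) hGinv hφinv0 hG0 K (fun s => hφK i0 s)
      _ = K * ∑ s : ι → Bool, (∏ q : ι, w (s q)) * (A s * ∏ i ∈ u, φ i s (s (coord i))) := by
          congr 1
          apply Finset.sum_congr rfl
          intro s _
          rw [← Finset.mul_prod_erase Finset.univ (fun q => w (s q)) (Finset.mem_univ q0)]
          simp only [hGdef]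
          ring
      _ ≤ K * (K ^ u.card * ∑ s : ι → Bool, (∏ q : ι, w (s q)) * A s) :=
          mul_le_mul_of_nonneg_left ih hK0
      _ = K ^ (insert i0 u).card * ∑ s : ι → Bool, (∏ q : ι, w (s q)) * A s := by
          rw [Finset.card_insert_of_notMem hi0, pow_succ]
          ring

open Fin.NatCast in
def colC (N : ℕ) [NeZero N] (n : Fin N) (m : ℕ) : Fin N := n - 1 - (m : Fin N)

open Fin.NatCast in
lemma colC_inj (N : ℕ) [NeZero N] (n : Fin N) {m1 m2 : ℕ} (h1 : m1 < N) (h2 : m2 < N)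
    (h : colC N n m1 = colC N n m2) : m1 = m2 := by
  unfold colC at h
  have h3 : ((m1 : ℕ) : Fin N) = ((m2 : ℕ) : Fin N) := sub_right_injective h
  have h4 := congrArg Fin.val h3
  rwa [Fin.val_natCast, Fin.val_natCast, Nat.mod_eq_of_lt h1, Nat.mod_eq_of_lt h2] at h4

open Fin.NatCast in
lemma colC_ne_n (N : ℕ) [NeZero N] (n : Fin N) {m : ℕ} (hm : m < N - 1) :
    colC N n m ≠ n := by
  intro h
  unfold colC at h
  rw [sub_sub, sub_eq_self] at h
  have h2 : ((1 + m : ℕ) : Fin N) = 0 := by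
    push_cast
    exact h
  rw [Fin.natCast_eq_zero] at h2
  have := Nat.le_of_dvd (by omega : 0 < 1 + m) h2
  omega

open Fin.NatCast in
lemma reindex (N : ℕ) [NeZero N] (hN : 2 ≤ N) (n : Fin N) (f : Fin N → Fin N → ℝ) :
    ∑ j ∈ Finset.univ.erase n, f j (j - 1)
      = ∑ m ∈ Finset.range (N - 1), f (colC N n m) (colC N n (m + 1)) := by
  apply Finset.sum_nbij' (fun j => (n - 1 - j : Fin N).val) (fun m => colC N n m)
  · intro j hj
    rw [Finset.mem_range]
    have hjn : j ≠ n := Finset.ne_of_mem_erase hj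
    have hle : (n - 1 - j : Fin N).val ≤ N - 1 := by
      have := (n - 1 - j : Fin N).isLt
      omega
    rcases lt_or_eq_of_le hle with h | h
    · exact h
    · exfalso
      apply hjn
      set x := (n - 1 - j : Fin N) with hx
      have hj2 : j = n - 1 - x := by
        rw [hx, sub_sub_cancel]
      have h1x : x + (1 : Fin N) = 0 := by
        apply Fin.ext
        rw [Fin.val_add, Fin.val_one', Fin.val_zero, h,
          Nat.mod_eq_of_lt (by omega : 1 < N)]
        have hNN : N - 1 + 1 = N := by omega
        rw [hNN, Nat.mod_self]
      rw [hj2, sub_sub, add_comm (1 : Fin N) x, h1x, sub_zero]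
  · intro m hm
    rw [Finset.mem_range] at hm
    exact Finset.mem_erase_of_ne_of_mem (colC_ne_n N n hm) (Finset.mem_univ _)
  · intro j hj
    unfold colC
    rw [Fin.cast_val_eq_self, sub_sub_cancel]
  · intro m hm
    rw [Finset.mem_range] at hm
    unfold colC
    rw [sub_sub_cancel, Fin.val_natCast, Nat.mod_eq_of_lt (by omega)]
  · intro j hj
    congr 1
    · unfold colC
      rw [Fin.cast_val_eq_self, sub_sub_cancel]
    · unfold colC
      rw [Nat.cast_add, Nat.cast_one, Fin.cast_val_eq_self, sub_add_eq_sub_sub,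
        sub_sub_cancel]

def b2r (b : Bool) : ℝ := if b then 1 else 0

noncomputable def bw (p : ℝ) (b : Bool) : ℝ := if b then p else 1 - p

def Eterm (L N : ℕ) [NeZero N] (p : ℝ) (ℓ : Fin L) (n : Fin N) (m : ℕ)
    (s : Fin L × Fin N → Bool) : ℝ :=
  ∑ i : Fin L, b2r (s (ℓ, colC N n m)) * b2r (s (i, colC N n 0)) *
    (b2r (s (i, colC N n (m + 1))) - p)

lemma main_sum (L N : ℕ) [NeZero N] (p t : ℝ) (hp : 0 ≤ p) (hp1 : p ≤ 1)
    (ℓ : Fin L) (n : Fin N) :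
    ∀ M : ℕ, M + 1 ≤ N →
    ∑ s : Fin L × Fin N → Bool, (∏ q : Fin L × Fin N, bw p (s q)) *
        Real.exp (t * ∑ m ∈ Finset.range M, Eterm L N p ℓ n m s)
      ≤ Real.exp (t ^ 2 / 8) ^ (L * M) := by
  have hwsum : bw p true + bw p false = 1 := by simp [bw]
  have hw0 : ∀ b, 0 ≤ bw p b := by
    intro b; cases b <;> simp [bw] <;> linarith
  intro M
  induction M with
  | zero =>
    intro _
    simp only [Finset.range_zero, Finset.sum_empty, mul_zero, Real.exp_zero, mul_one,
      Nat.mul_zero, pow_zero]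
    rw [sum_weights (bw p) hwsum]
  | succ M ih =>
    intro hM1
    have ihM := ih (by omega)
    have hnec : ∀ k : ℕ, k ≤ M → colC N n k ≠ colC N n (M + 1) := by
      intro k hk h
      have := colC_inj N n (by omega) (by omega) h
      omega
    have hneq : ∀ (x i : Fin L) (k : ℕ), k ≤ M →
        ((x, colC N n k) : Fin L × Fin N) ≠ (i, colC N n (M + 1)) := by
      intro x i k hk h
      exact hnec k hk (congrArg Prod.snd h)
    have hAinv : ∀ (s : Fin L × Fin N → Bool) (i : Fin L) (b : Bool),
        Real.exp (t * ∑ m ∈ Finset.range M,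
            Eterm L N p ℓ n m (Function.update s (i, colC N n (M + 1)) b))
          = Real.exp (t * ∑ m ∈ Finset.range M, Eterm L N p ℓ n m s) := by
      intro s i b
      congr 1
      congr 1
      apply Finset.sum_congr rfl
      intro m hm
      have hmM : m < M := Finset.mem_range.mp hm
      unfold Eterm
      apply Finset.sum_congr rfl
      intro i' _
      rw [Function.update_of_ne (hneq ℓ i m (by omega)),
        Function.update_of_ne (hneq i' i 0 (by omega)),
        Function.update_of_ne (hneq i' i (m + 1) (by omega))]
    have hφinv : ∀ (s : Fin L × Fin N → Bool) (i i' : Fin L) (b b' : Bool),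
        Real.exp (t * (b2r (Function.update s (i', colC N n (M + 1)) b' (ℓ, colC N n M)) *
            b2r (Function.update s (i', colC N n (M + 1)) b' (i, colC N n 0)) * (b2r b - p)))
          = Real.exp (t * (b2r (s (ℓ, colC N n M)) * b2r (s (i, colC N n 0)) * (b2r b - p))) := by
      intro s i i' b b'
      rw [Function.update_of_ne (hneq ℓ i' M (by omega)),
        Function.update_of_ne (hneq i i' 0 (by omega))]
    have hoeff := hoeff_aux p hp hp1 t
    have hexp0 : (0:ℝ) ≤ t ^ 2 / 8 := by positivity
    have hφK : ∀ (i : Fin L) (s : Fin L × Fin N → Bool),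
        ∑ b : Bool, bw p b *
            Real.exp (t * (b2r (s (ℓ, colC N n M)) * b2r (s (i, colC N n 0)) * (b2r b - p)))
          ≤ Real.exp (t ^ 2 / 8) := by
      intro i s
      rw [Fintype.sum_bool]
      cases hb1 : s (ℓ, colC N n M) <;> cases hb2 : s (i, colC N n 0) <;>
        simp only [b2r, bw, if_true, if_false, Bool.false_eq_true, one_mul, zero_mul,
          mul_zero, mul_one, zero_sub, sub_zero, Real.exp_zero]
      · have := Real.one_le_exp hexp0; linarith
      · have := Real.one_le_exp hexp0; linarith
      · have := Real.one_le_exp hexp0; linarith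
      · rw [show t * -p = t * (0 - p) from by ring]
        exact hoeff
    have hinner := inner_peel (bw p) hwsum hw0 (Real.exp (t ^ 2 / 8))
      (fun s => Real.exp (t * ∑ m ∈ Finset.range M, Eterm L N p ℓ n m s))
      (fun s => (Real.exp_pos _).le)
      (fun i : Fin L => ((i, colC N n (M + 1)) : Fin L × Fin N))
      (fun i i' h => (Prod.mk.injEq _ _ _ _).mp h |>.1)
      (fun i s b => Real.exp (t * (b2r (s (ℓ, colC N n M)) * b2r (s (i, colC N n 0)) * (b2r b - p))))
      (fun s i b => hAinv s i b)
      (fun s i i' b b' => hφinv s i i' b b')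
      (fun i s b => (Real.exp_pos _).le)
      hφK
      Finset.univ
    have hstep : ∀ s : Fin L × Fin N → Bool,
        (∏ q : Fin L × Fin N, bw p (s q)) *
            Real.exp (t * ∑ m ∈ Finset.range (M + 1), Eterm L N p ℓ n m s)
          = (∏ q : Fin L × Fin N, bw p (s q)) *
            (Real.exp (t * ∑ m ∈ Finset.range M, Eterm L N p ℓ n m s) *
              ∏ i : Fin L, Real.exp (t * (b2r (s (ℓ, colC N n M)) * b2r (s (i, colC N n 0)) *
                (b2r (s (i, colC N n (M + 1))) - p)))) := by
      intro s
      rw [Finset.sum_range_succ, mul_add, Real.exp_add]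
      congr 1
      congr 1
      unfold Eterm
      rw [Finset.mul_sum, Real.exp_sum]
    calc ∑ s : Fin L × Fin N → Bool, (∏ q : Fin L × Fin N, bw p (s q)) *
            Real.exp (t * ∑ m ∈ Finset.range (M + 1), Eterm L N p ℓ n m s)
        = ∑ s : Fin L × Fin N → Bool, (∏ q : Fin L × Fin N, bw p (s q)) *
            (Real.exp (t * ∑ m ∈ Finset.range M, Eterm L N p ℓ n m s) *
              ∏ i : Fin L, Real.exp (t * (b2r (s (ℓ, colC N n M)) * b2r (s (i, colC N n 0)) *
                (b2r (s (i, colC N n (M + 1))) - p)))) :=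
          Finset.sum_congr rfl fun s _ => hstep s
      _ ≤ Real.exp (t ^ 2 / 8) ^ (Finset.univ : Finset (Fin L)).card *
            ∑ s : Fin L × Fin N → Bool, (∏ q : Fin L × Fin N, bw p (s q)) *
              Real.exp (t * ∑ m ∈ Finset.range M, Eterm L N p ℓ n m s) := hinner
      _ ≤ Real.exp (t ^ 2 / 8) ^ (Finset.univ : Finset (Fin L)).card *
            Real.exp (t ^ 2 / 8) ^ (L * M) :=
          mul_le_mul_of_nonneg_left ihM (by positivity)
      _ = Real.exp (t ^ 2 / 8) ^ (L * (M + 1)) := by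
          rw [Finset.card_univ, Fintype.card_fin, ← pow_add]
          congr 1
          ring

noncomputable def bmB (p : ℝ) : MeasureTheory.Measure Bool :=
  ENNReal.ofReal p • MeasureTheory.Measure.dirac true +
    ENNReal.ofReal (1 - p) • MeasureTheory.Measure.dirac false

lemma bmB_prob (p : ℝ) (hp : 0 ≤ p) (hp1 : p ≤ 1) :
    MeasureTheory.IsProbabilityMeasure (bmB p) := by
  constructor
  simp only [bmB, MeasureTheory.Measure.add_apply, MeasureTheory.Measure.smul_apply,
    MeasureTheory.measure_univ, smul_eq_mul, mul_one]
  rw [← ENNReal.ofReal_add hp (by linarith)]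
  norm_num

lemma berMeasure_prob (p : ℝ) (hp : 0 ≤ p) (hp1 : p ≤ 1) :
    MeasureTheory.IsProbabilityMeasure (berMeasure p) := by
  constructor
  simp only [berMeasure, MeasureTheory.Measure.add_apply, MeasureTheory.Measure.smul_apply,
    MeasureTheory.measure_univ, smul_eq_mul, mul_one]
  rw [← ENNReal.ofReal_add hp (by linarith)]
  norm_num

lemma berMeasure_eq_map (p : ℝ) : berMeasure p = MeasureTheory.Measure.map b2r (bmB p) := by
  unfold berMeasure bmB
  rw [MeasureTheory.Measure.map_add _ _ (measurable_of_countable b2r),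
    MeasureTheory.Measure.map_smul, MeasureTheory.Measure.map_smul,
    MeasureTheory.Measure.map_dirac' (measurable_of_countable b2r),
    MeasureTheory.Measure.map_dirac' (measurable_of_countable b2r)]
  simp [b2r]

lemma bmB_singleton (p : ℝ) (hp : 0 ≤ p) (hp1 : p ≤ 1) (b : Bool) :
    ((bmB p) {b}).toReal = bw p b := by
  cases b
  · have h : (bmB p) {false} = ENNReal.ofReal (1 - p) := by
      simp [bmB, MeasureTheory.Measure.dirac_apply]
    rw [h, ENNReal.toReal_ofReal (by linarith : (0:ℝ) ≤ 1 - p)]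
    simp [bw]
  · have h : (bmB p) {true} = ENNReal.ofReal p := by
      simp [bmB, MeasureTheory.Measure.dirac_apply]
    rw [h, ENNReal.toReal_ofReal hp]
    simp [bw]

/-- With i.i.d. Bernoulli(p) entries (column index cyclic in `Fin N`), the moment
generating function of `S_{ℓ,n} = ∑_{j≠n} ∑_i a_{ℓ,j} a_{i,n-1}(a_{i,j-1}-p)` satisfies
`E[e^{t S}] ≤ e^{t²/8 · L(N-1)}`. -/
theorem interference_mgf_bound (L N : ℕ) [NeZero N] (hN : 2 ≤ N)
    (p : ℝ) (hp : 0 < p) (hp1 : p < 1) (ℓ : Fin L) (n : Fin N) (t : ℝ) :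
    ∫ ω : Fin L × Fin N → ℝ,
        Real.exp (t * ∑ j ∈ Finset.univ.erase n, ∑ i : Fin L,
          ω (ℓ, j) * ω (i, n - 1) * (ω (i, j - 1) - p))
      ∂(Measure.pi fun _ : Fin L × Fin N => berMeasure p)
      ≤ Real.exp (t ^ 2 / 8 * L * (N - 1)) := by
  classical
  have hp0 : 0 ≤ p := hp.le
  have hp1' : p ≤ 1 := hp1.le
  haveI hPB : MeasureTheory.IsProbabilityMeasure (bmB p) := bmB_prob p hp0 hp1'
  haveI hPber : MeasureTheory.IsProbabilityMeasure (berMeasure p) := berMeasure_prob p hp0 hp1'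
  set f : (Fin L × Fin N → ℝ) → ℝ := fun ω => Real.exp (t * ∑ j ∈ Finset.univ.erase n,
    ∑ i : Fin L, ω (ℓ, j) * ω (i, n - 1) * (ω (i, j - 1) - p)) with hf
  have hsum : Measurable (fun ω : Fin L × Fin N → ℝ => ∑ j ∈ Finset.univ.erase n,
      ∑ i : Fin L, ω (ℓ, j) * ω (i, n - 1) * (ω (i, j - 1) - p)) :=
    Finset.measurable_sum _ (fun j _ => Finset.measurable_sum _ (fun i _ =>
      (((measurable_pi_apply (ℓ, j)).mul (measurable_pi_apply (i, n - 1))).mul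
        ((measurable_pi_apply (i, j - 1)).sub measurable_const))))
  have hfm : Measurable f := Real.measurable_exp.comp (hsum.const_mul t)
  have hmp : MeasureTheory.MeasurePreserving (fun (s : Fin L × Fin N → Bool) q => b2r (s q))
      (Measure.pi fun _ => bmB p) (Measure.pi fun _ => berMeasure p) :=
    MeasureTheory.measurePreserving_pi _ _
      (fun _ => ⟨measurable_of_countable b2r, (berMeasure_eq_map p).symm⟩)
  have h1 : ∫ ω, f ω ∂(Measure.pi fun _ : Fin L × Fin N => berMeasure p)
      = ∫ s : Fin L × Fin N → Bool, f (fun q => b2r (s q)) ∂(Measure.pi fun _ => bmB p) := by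
    rw [← hmp.map_eq, MeasureTheory.integral_map hmp.measurable.aemeasurable
      hfm.aestronglyMeasurable]
  have h2 : ∫ s : Fin L × Fin N → Bool, f (fun q => b2r (s q)) ∂(Measure.pi fun _ => bmB p)
      = ∑ s : Fin L × Fin N → Bool, (∏ q : Fin L × Fin N, bw p (s q)) * f (fun q => b2r (s q)) := by
    rw [MeasureTheory.integral_fintype MeasureTheory.Integrable.of_finite]
    apply Finset.sum_congr rfl
    intro s _
    rw [smul_eq_mul]
    congr 1
    have hsing : ({s} : Set ((Fin L × Fin N) → Bool)) = Set.pi Set.univ (fun q => {s q}) := by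
      ext x
      simp [Set.mem_pi, funext_iff]
    rw [measureReal_def, hsing, Measure.pi_pi, ENNReal.toReal_prod]
    exact Finset.prod_congr rfl fun q _ => bmB_singleton p hp0 hp1' (s q)
  have hc0 : colC N n 0 = n - 1 := by
    unfold colC
    simp
  have harg : ∀ s : (Fin L × Fin N) → Bool,
      (∑ j ∈ Finset.univ.erase n, ∑ i : Fin L,
        b2r (s (ℓ, j)) * b2r (s (i, n - 1)) * (b2r (s (i, j - 1)) - p))
      = ∑ m ∈ Finset.range (N - 1), Eterm L N p ℓ n m s := by
    intro s
    rw [reindex N hN n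
      (fun j k => ∑ i : Fin L, b2r (s (ℓ, j)) * b2r (s (i, n - 1)) * (b2r (s (i, k)) - p))]
    apply Finset.sum_congr rfl
    intro m _
    unfold Eterm
    apply Finset.sum_congr rfl
    intro i _
    rw [hc0]
  have h3 : ∀ s : (Fin L × Fin N) → Bool, f (fun q => b2r (s q))
      = Real.exp (t * ∑ m ∈ Finset.range (N - 1), Eterm L N p ℓ n m s) := by
    intro s
    simp only [hf]
    exact congrArg (fun x => Real.exp (t * x)) (harg s)
  calc ∫ ω, f ω ∂(Measure.pi fun _ : Fin L × Fin N => berMeasure p)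
      = ∑ s : Fin L × Fin N → Bool, (∏ q : Fin L × Fin N, bw p (s q)) *
          Real.exp (t * ∑ m ∈ Finset.range (N - 1), Eterm L N p ℓ n m s) := by
        rw [h1, h2]
        exact Finset.sum_congr rfl fun s _ => by rw [h3 s]
    _ ≤ Real.exp (t ^ 2 / 8) ^ (L * (N - 1)) :=
        main_sum L N p t hp0 hp1' ℓ n (N - 1) (by omega)
    _ = Real.exp (t ^ 2 / 8 * L * (N - 1)) := by
        rw [← Real.exp_nat_mul]
        congr 1
        push_cast [Nat.cast_sub (by omega : 1 ≤ N)]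
        ring
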